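/- Let σ > 0 and α > 0. For ε > 0 let π^ε be the probability density on ℝ proportional to e^{-(x²/2 + α sin(2πx/ε))/σ}, and let π⁰(x) = (2πσ)^{-1/2} e^{-x²/(2σ)} be the standard Gaussian density with variance σ. Set I₀ = ∫_0^1 e^{-(α/σ) sin(2πy)} dy. Then liminf_{ε → 0⁺} ∫_ℝ |π^ε(x) − π⁰(x)| dx ≥ (1/6)·(1 − e^{-α/(2σ)}/I₀) > 0. In particular, π^ε does not converge to π⁰ in total variation as ε → 0. -/

import Mathlib

open MeasureTheory Filter Real intervalIntegral Topology

set_option maxHeartbeats 1000000 in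
private lemma num_factor (σ α ε : ℝ) (hσ : 0 < σ) (x : ℝ) :
    Real.exp (-(x ^ 2 / 2 + α * Real.sin (2 * π * x / ε)) / σ)
      = Real.exp (-x ^ 2 / (2 * σ)) * Real.exp (-(α / σ) * Real.sin (2 * π * x / ε)) := by
  rw [← Real.exp_add]
  congr 1
  field_simp
  ring

private lemma gauss_integrable (σ : ℝ) (hσ : 0 < σ) :
    Integrable (fun x : ℝ => Real.exp (-x ^ 2 / (2 * σ))) := by
  have h := integrable_exp_neg_mul_sq (show (0:ℝ) < 1 / (2 * σ) by positivity)
  convert h using 2 with x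
  field_simp

private lemma gauss_value (σ : ℝ) (hσ : 0 < σ) :
    ∫ x : ℝ, Real.exp (-x ^ 2 / (2 * σ)) = Real.sqrt (2 * π * σ) := by
  have h := integral_gaussian (1 / (2 * σ))
  have : (fun x : ℝ => Real.exp (-x ^ 2 / (2 * σ))) = fun x : ℝ => Real.exp (-(1 / (2 * σ)) * x ^ 2) := by
    funext x; congr 1; field_simp
  rw [this, h]
  congr 1
  field_simp

private lemma num_integrable (σ α ε : ℝ) (hσ : 0 < σ) (hα : 0 < α) :
    Integrable (fun x : ℝ => Real.exp (-(x ^ 2 / 2 + α * Real.sin (2 * π * x / ε)) / σ)) := by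
  have hcont : Continuous (fun x : ℝ => Real.exp (-(x ^ 2 / 2 + α * Real.sin (2 * π * x / ε)) / σ)) := by
    fun_prop
  refine ((gauss_integrable σ hσ).const_mul (Real.exp (α / σ))).mono' hcont.aestronglyMeasurable ?_
  refine Filter.Eventually.of_forall fun x => ?_
  rw [Real.norm_eq_abs, abs_of_pos (Real.exp_pos _), num_factor σ α ε hσ x, mul_comm]
  apply mul_le_mul_of_nonneg_right _ (Real.exp_pos _).le
  rw [Real.exp_le_exp]
  have h1 : Real.sin (2 * π * x / ε) ≥ -1 := Real.neg_one_le_sin _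
  have h2 : 0 < α / σ := by positivity
  nlinarith

private lemma Z_pos (σ α ε : ℝ) (hσ : 0 < σ) (hα : 0 < α) :
    0 < ∫ x : ℝ, Real.exp (-(x ^ 2 / 2 + α * Real.sin (2 * π * x / ε)) / σ) := by
  have hlow : ∀ x : ℝ, Real.exp (-α / σ) * Real.exp (-x ^ 2 / (2 * σ))
      ≤ Real.exp (-(x ^ 2 / 2 + α * Real.sin (2 * π * x / ε)) / σ) := by
    intro x
    rw [num_factor σ α ε hσ x, mul_comm (Real.exp (-α / σ))]
    apply mul_le_mul_of_nonneg_left _ (Real.exp_pos _).le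
    rw [Real.exp_le_exp]
    have h1 : Real.sin (2 * π * x / ε) ≤ 1 := Real.sin_le_one _
    have h2 : 0 < α / σ := by positivity
    rw [neg_div]
    nlinarith
  have h1 : 0 < Real.exp (-α / σ) * Real.sqrt (2 * π * σ) := by
    have : (0:ℝ) < 2 * π * σ := by positivity
    positivity
  calc (0:ℝ) < Real.exp (-α / σ) * Real.sqrt (2 * π * σ) := h1
    _ = ∫ x : ℝ, Real.exp (-α / σ) * Real.exp (-x ^ 2 / (2 * σ)) := by
        rw [MeasureTheory.integral_const_mul, gauss_value σ hσ]
    _ ≤ _ := integral_mono ((gauss_integrable σ hσ).const_mul _)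
        (num_integrable σ α ε hσ hα) hlow

private lemma sin_2pi_int_integral : ∫ y in (0:ℝ)..1, Real.sin (2 * π * y) = 0 := by
  have h2π : (2 * π : ℝ) ≠ 0 := by positivity
  rw [intervalIntegral.integral_comp_mul_left Real.sin h2π]
  simp [Real.cos_two_pi]

private lemma I0_ge_one (σ α : ℝ) (hσ : 0 < σ) (hα : 0 < α) :
    1 ≤ ∫ y in (0:ℝ)..1, Real.exp (-(α / σ) * Real.sin (2 * π * y)) := by
  have hle : ∀ y ∈ Set.Icc (0:ℝ) 1,
      1 + -(α / σ) * Real.sin (2 * π * y) ≤ Real.exp (-(α / σ) * Real.sin (2 * π * y)) := by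
    intro y _
    have := Real.add_one_le_exp (-(α / σ) * Real.sin (2 * π * y))
    linarith
  have hint1 : IntervalIntegrable (fun y : ℝ => 1 + -(α / σ) * Real.sin (2 * π * y)) volume 0 1 := by
    apply Continuous.intervalIntegrable; fun_prop
  have hint2 : IntervalIntegrable (fun y : ℝ => Real.exp (-(α / σ) * Real.sin (2 * π * y))) volume 0 1 := by
    apply Continuous.intervalIntegrable; fun_prop
  have h := intervalIntegral.integral_mono_on (by norm_num : (0:ℝ) ≤ 1) hint1 hint2 hle
  calc (1:ℝ) = ∫ y in (0:ℝ)..1, (1 + -(α / σ) * Real.sin (2 * π * y)) := by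
        rw [intervalIntegral.integral_add (by apply Continuous.intervalIntegrable; fun_prop)
          (by apply Continuous.intervalIntegrable; fun_prop),
          intervalIntegral.integral_const_mul, sin_2pi_int_integral]
        simp
    _ ≤ _ := h

private lemma sin_ge_half {t : ℝ} (ht : t ∈ Set.Icc (1/12 : ℝ) (5/12)) :
    1 / 2 ≤ Real.sin (2 * π * t) := by
  have hπ := Real.pi_pos
  have key : ∀ θ : ℝ, π / 6 ≤ θ → θ ≤ π / 2 → 1 / 2 ≤ Real.sin θ := by
    intro θ h1 h2
    rw [← Real.sin_pi_div_six]
    apply Real.strictMonoOn_sin.monotoneOn _ _ h1 <;>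
      constructor <;> nlinarith
  rcases le_or_gt (2 * π * t) (π / 2) with h | h
  · exact key _ (by nlinarith [ht.1]) h
  · rw [← Real.sin_pi_sub]
    exact key _ (by nlinarith [ht.2]) (by nlinarith)

-- ∫ over one ε-period of the oscillatory factor equals ε * I₀
private lemma psi_period (c ε : ℝ) (hε : 0 < ε) (k : ℤ) :
    ∫ x in (k * ε)..((k + 1 : ℤ) * ε), Real.exp (-c * Real.sin (2 * π * x / ε))
      = ε * ∫ y in (0:ℝ)..1, Real.exp (-c * Real.sin (2 * π * y)) := by
  have hε' : ε ≠ 0 := hε.ne'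
  have hfun : (fun x : ℝ => Real.exp (-c * Real.sin (2 * π * x / ε)))
      = fun x : ℝ => (fun y : ℝ => Real.exp (-c * Real.sin (2 * π * y))) (x / ε) := by
    funext x; rw [mul_div_assoc]
  rw [hfun, intervalIntegral.integral_comp_div (fun y => Real.exp (-c * Real.sin (2 * π * y))) hε']
  have h1 : (k : ℝ) * ε / ε = (k : ℝ) := by field_simp
  have h2 : ((k + 1 : ℤ) : ℝ) * ε / ε = (k : ℝ) + 1 := by push_cast; field_simp
  rw [h1, h2]
  have hper : Function.Periodic (fun y : ℝ => Real.exp (-c * Real.sin (2 * π * y))) 1 := by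
    intro y
    simp only []
    congr 2
    rw [mul_add, mul_one, Real.sin_add_two_pi]
  have := hper.intervalIntegral_add_eq (k : ℝ) 0
  simp only [zero_add] at this
  rw [smul_eq_mul, this]

-- ratio bound for the Gaussian on an interval of length ε inside [-K, K]
private lemma gauss_ratio (σ K ε A : ℝ) (hσ : 0 < σ) (hε : 0 < ε) (hK : 0 < K)
    (h1 : -K ≤ A) (h2 : A + ε ≤ K) {x y : ℝ}
    (hx : x ∈ Set.Icc A (A + ε)) (hy : y ∈ Set.Icc A (A + ε)) :
    Real.exp (-y ^ 2 / (2 * σ)) ≤ Real.exp (K * ε / σ) * Real.exp (-x ^ 2 / (2 * σ)) := by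
  rw [← Real.exp_add, Real.exp_le_exp]
  have key : x ^ 2 - y ^ 2 ≤ 2 * (K * ε) := by
    have h3 : |x - y| ≤ ε := by
      rw [abs_le]; constructor <;> [linarith [hx.1, hy.2]; linarith [hx.2, hy.1]]
    have h4 : |x + y| ≤ 2 * K := by
      rw [abs_le]; constructor <;> [linarith [hx.1, hy.1]; linarith [hx.2, hy.2]]
    calc x ^ 2 - y ^ 2 = (x - y) * (x + y) := by ring
      _ ≤ |(x - y) * (x + y)| := le_abs_self _
      _ = |x - y| * |x + y| := abs_mul _ _
      _ ≤ ε * (2 * K) := mul_le_mul h3 h4 (abs_nonneg _) hε.le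
      _ = 2 * (K * ε) := by ring
  rw [div_add_div _ _ (by positivity : (σ:ℝ) ≠ 0) (by positivity : (2*σ:ℝ) ≠ 0)]
  rw [div_le_div_iff₀ (by positivity) (by positivity)]
  nlinarith [sq_nonneg σ, hσ]

-- pointwise lower bound on the Gaussian in terms of its average over the period
private lemma gauss_ptwise_lb (σ K ε A : ℝ) (hσ : 0 < σ) (hε : 0 < ε) (hK : 0 < K)
    (h1 : -K ≤ A) (h2 : A + ε ≤ K) {x : ℝ} (hx : x ∈ Set.Icc A (A + ε)) :
    Real.exp (-(K * ε) / σ) * (∫ y in A..(A + ε), Real.exp (-y ^ 2 / (2 * σ))) / ε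
      ≤ Real.exp (-x ^ 2 / (2 * σ)) := by
  have havg : (∫ y in A..(A + ε), Real.exp (-y ^ 2 / (2 * σ)))
      ≤ ε * (Real.exp (K * ε / σ) * Real.exp (-x ^ 2 / (2 * σ))) := by
    have := intervalIntegral.integral_mono_on (by linarith : A ≤ A + ε)
      (by apply Continuous.intervalIntegrable; fun_prop)
      (intervalIntegrable_const (μ := volume))
      (fun y hy => gauss_ratio σ K ε A hσ hε hK h1 h2 hx hy)
    simp only [intervalIntegral.integral_const, smul_eq_mul] at this
    nlinarith [this]
  rw [div_le_iff₀ hε, neg_div, Real.exp_neg]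
  rw [inv_mul_eq_div, div_le_iff₀ (Real.exp_pos _)]
  calc (∫ y in A..(A + ε), Real.exp (-y ^ 2 / (2 * σ)))
      ≤ ε * (Real.exp (K * ε / σ) * Real.exp (-x ^ 2 / (2 * σ))) := havg
    _ = Real.exp (-x ^ 2 / (2 * σ)) * ε * Real.exp (K * ε / σ) := by ring

-- B1 : per-period lower bound for the partition function integrand
private lemma period_Z (σ α K ε : ℝ) (hσ : 0 < σ) (hα : 0 < α) (hε : 0 < ε) (hK : 0 < K)
    (k : ℤ) (h1 : -K ≤ k * ε) (h2 : ((k:ℝ) + 1) * ε ≤ K) :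
    Real.exp (-(K * ε) / σ) * (∫ y in (0:ℝ)..1, Real.exp (-(α/σ) * Real.sin (2 * π * y)))
        * (∫ y in ((k:ℝ) * ε)..(((k:ℝ) + 1) * ε), Real.exp (-y ^ 2 / (2 * σ)))
      ≤ ∫ x in ((k:ℝ) * ε)..(((k:ℝ) + 1) * ε),
          Real.exp (-x ^ 2 / (2 * σ)) * Real.exp (-(α/σ) * Real.sin (2 * π * x / ε)) := by
  set A : ℝ := (k : ℝ) * ε with hA
  have hAB : ((k:ℝ) + 1) * ε = A + ε := by rw [hA]; ring
  rw [hAB]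
  have h2' : A + ε ≤ K := hAB ▸ h2
  set m : ℝ := ∫ y in A..(A + ε), Real.exp (-y ^ 2 / (2 * σ)) with hm
  have hmono : ∀ x ∈ Set.Icc A (A + ε),
      (Real.exp (-(K * ε) / σ) * m / ε) * Real.exp (-(α/σ) * Real.sin (2 * π * x / ε))
        ≤ Real.exp (-x ^ 2 / (2 * σ)) * Real.exp (-(α/σ) * Real.sin (2 * π * x / ε)) := by
    intro x hx
    apply mul_le_mul_of_nonneg_right _ (Real.exp_pos _).le
    exact gauss_ptwise_lb σ K ε A hσ hε hK h1 h2' hx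
  have hint := intervalIntegral.integral_mono_on (μ := volume) (by linarith : A ≤ A + ε)
    (by apply Continuous.intervalIntegrable; fun_prop)
    (by apply Continuous.intervalIntegrable; fun_prop) hmono
  have hsub : ∫ x in A..(A + ε),
      (Real.exp (-(K * ε) / σ) * m / ε) * Real.exp (-(α/σ) * Real.sin (2 * π * x / ε))
      = (Real.exp (-(K * ε) / σ) * m / ε) *
          ∫ x in A..(A + ε), Real.exp (-(α/σ) * Real.sin (2 * π * x / ε)) := by
    rw [intervalIntegral.integral_const_mul]
  have hper : ∫ x in A..(A + ε), Real.exp (-(α/σ) * Real.sin (2 * π * x / ε))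
      = ε * ∫ y in (0:ℝ)..1, Real.exp (-(α/σ) * Real.sin (2 * π * y)) := by
    have := psi_period (α/σ) ε hε k
    rw [hA, hAB.symm]
    convert this using 2
    push_cast; ring
  calc Real.exp (-(K * ε) / σ) * (∫ y in (0:ℝ)..1, Real.exp (-(α/σ) * Real.sin (2 * π * y))) * m
      = (Real.exp (-(K * ε) / σ) * m / ε) *
          (ε * ∫ y in (0:ℝ)..1, Real.exp (-(α/σ) * Real.sin (2 * π * y))) := by
        field_simp
    _ = ∫ x in A..(A + ε),
          (Real.exp (-(K * ε) / σ) * m / ε) * Real.exp (-(α/σ) * Real.sin (2 * π * x / ε)) := by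
        rw [hsub, hper]
    _ ≤ _ := hint

private lemma period_TV (σ α K ε Z : ℝ) (hσ : 0 < σ) (hα : 0 < α) (hε : 0 < ε) (hK : 0 < K)
    (hZ : 0 < Z) (hβ : 0 ≤ (Real.sqrt (2*π*σ))⁻¹ - Real.exp (-α/(2*σ))/Z)
    (k : ℤ) (h1 : -K ≤ (k:ℝ) * ε) (h2 : ((k:ℝ) + 1) * ε ≤ K) :
    ((Real.sqrt (2*π*σ))⁻¹ - Real.exp (-α/(2*σ))/Z) * Real.exp (-(K*ε)/σ) / 3
        * (∫ y in ((k:ℝ)*ε)..(((k:ℝ)+1)*ε), Real.exp (-y^2/(2*σ)))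
      ≤ ∫ x in ((k:ℝ)*ε)..(((k:ℝ)+1)*ε),
          |Real.exp (-(x^2/2 + α * Real.sin (2*π*x/ε))/σ) / Z
            - (Real.sqrt (2*π*σ))⁻¹ * Real.exp (-x^2/(2*σ))| := by
  set G : ℝ := Real.sqrt (2*π*σ) with hG
  set β : ℝ := G⁻¹ - Real.exp (-α/(2*σ))/Z with hβdef
  set A : ℝ := (k : ℝ) * ε with hA
  have hAB : ((k:ℝ) + 1) * ε = A + ε := by rw [hA]; ring
  rw [hAB]
  have h2' : A + ε ≤ K := hAB ▸ h2
  set m : ℝ := ∫ y in A..(A + ε), Real.exp (-y ^ 2 / (2 * σ)) with hm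
  set c₁ : ℝ := A + ε/12 with hc₁
  set d₁ : ℝ := A + 5*ε/12 with hd₁
  have hsub : Set.Icc c₁ d₁ ⊆ Set.Icc A (A + ε) :=
    Set.Icc_subset_Icc (by rw [hc₁]; linarith) (by rw [hd₁]; linarith)
  -- sine is at least 1/2 on [c₁, d₁]
  have hsin : ∀ x ∈ Set.Icc c₁ d₁, 1/2 ≤ Real.sin (2*π*x/ε) := by
    intro x hx
    have hx1 : A + ε/12 ≤ x := by have := hx.1; rwa [hc₁] at this
    have hx2 : x ≤ A + 5*ε/12 := by have := hx.2; rwa [hd₁] at this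
    rw [hA] at hx1 hx2
    have ht : x/ε - (k:ℝ) ∈ Set.Icc (1/12 : ℝ) (5/12) := by
      constructor
      · rw [le_sub_iff_add_le, le_div_iff₀ hε]; linarith
      · rw [sub_le_iff_le_add, div_le_iff₀ hε]; linarith
    have heq : 2*π*x/ε = 2*π*(x/ε - (k:ℝ)) + (k:ℤ) * (2*π) := by
      push_cast; field_simp; ring
    rw [heq, Real.sin_add_int_mul_two_pi]
    exact sin_ge_half ht
  -- pointwise lower bound on [c₁, d₁]
  have hpt : ∀ x ∈ Set.Icc c₁ d₁,
      β * (Real.exp (-(K*ε)/σ) * m / ε)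
        ≤ |Real.exp (-(x^2/2 + α * Real.sin (2*π*x/ε))/σ) / Z - G⁻¹ * Real.exp (-x^2/(2*σ))| := by
    intro x hx
    have hφpos : (0:ℝ) < Real.exp (-x^2/(2*σ)) := Real.exp_pos _
    have hψ : Real.exp (-(α/σ) * Real.sin (2*π*x/ε)) ≤ Real.exp (-α/(2*σ)) := by
      rw [Real.exp_le_exp]
      have hs := hsin x hx
      have hc : 0 < α/σ := by positivity
      have h2σ : -α/(2*σ) = -(α/σ)*(1/2) := by
        rw [neg_div, neg_mul, neg_inj, div_mul_div_comm]
        ring_nf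
      rw [h2σ]
      nlinarith [mul_nonneg hc.le (by linarith : (0:ℝ) ≤ Real.sin (2*π*x/ε) - 1/2)]
    have hnum : Real.exp (-(x^2/2 + α * Real.sin (2*π*x/ε))/σ) / Z
        ≤ Real.exp (-x^2/(2*σ)) * Real.exp (-α/(2*σ)) / Z := by
      rw [div_le_div_iff_of_pos_right hZ, num_factor σ α ε hσ x]
      exact mul_le_mul_of_nonneg_left hψ hφpos.le
    have hlb : β * Real.exp (-x^2/(2*σ))
        ≤ G⁻¹ * Real.exp (-x^2/(2*σ))
          - Real.exp (-(x^2/2 + α * Real.sin (2*π*x/ε))/σ) / Z := by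
      rw [hβdef]
      have hrw : Real.exp (-x^2/(2*σ)) * Real.exp (-α/(2*σ)) / Z
          = Real.exp (-α/(2*σ))/Z * Real.exp (-x^2/(2*σ)) := by ring
      rw [hrw] at hnum
      nlinarith [hnum]
    have habs : G⁻¹ * Real.exp (-x^2/(2*σ))
          - Real.exp (-(x^2/2 + α * Real.sin (2*π*x/ε))/σ) / Z
        ≤ |Real.exp (-(x^2/2 + α * Real.sin (2*π*x/ε))/σ) / Z
            - G⁻¹ * Real.exp (-x^2/(2*σ))| := by
      rw [abs_sub_comm]
      exact le_abs_self _
    have hφlb : Real.exp (-(K*ε)/σ) * m / ε ≤ Real.exp (-x^2/(2*σ)) :=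
      gauss_ptwise_lb σ K ε A hσ hε hK h1 h2' (hsub hx)
    calc β * (Real.exp (-(K*ε)/σ) * m / ε) ≤ β * Real.exp (-x^2/(2*σ)) :=
          mul_le_mul_of_nonneg_left hφlb hβ
      _ ≤ _ := le_trans hlb habs
  -- integrate
  have hcd : c₁ ≤ d₁ := by rw [hc₁, hd₁]; linarith
  have hcont : Continuous (fun x : ℝ =>
      |Real.exp (-(x^2/2 + α * Real.sin (2*π*x/ε))/σ) / Z - G⁻¹ * Real.exp (-x^2/(2*σ))|) := by
    fun_prop
  have hint1 := intervalIntegral.integral_mono_on (μ := volume) hcd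
    (intervalIntegrable_const (μ := volume)) (hcont.intervalIntegrable _ _) hpt
  rw [intervalIntegral.integral_const, smul_eq_mul] at hint1
  have hint2 : (∫ x in c₁..d₁,
        |Real.exp (-(x^2/2 + α * Real.sin (2*π*x/ε))/σ) / Z - G⁻¹ * Real.exp (-x^2/(2*σ))|)
      ≤ ∫ x in A..(A+ε),
        |Real.exp (-(x^2/2 + α * Real.sin (2*π*x/ε))/σ) / Z - G⁻¹ * Real.exp (-x^2/(2*σ))| :=
    intervalIntegral.integral_mono_interval (by rw [hc₁]; linarith) hcd (by rw [hd₁]; linarith)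
      (Filter.Eventually.of_forall fun x => abs_nonneg _) (hcont.intervalIntegrable _ _)
  have hd₁c₁ : d₁ - c₁ = ε/3 := by rw [hc₁, hd₁]; ring
  calc β * Real.exp (-(K*ε)/σ) / 3 * m
      = (d₁ - c₁) * (β * (Real.exp (-(K*ε)/σ) * m / ε)) := by
        rw [hd₁c₁]; field_simp
    _ ≤ _ := le_trans hint1 hint2

private lemma TV_le_two (σ α ε : ℝ) (hσ : 0 < σ) (hα : 0 < α) :
    (∫ x : ℝ, |Real.exp (-(x ^ 2 / 2 + α * Real.sin (2 * π * x / ε)) / σ) /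
          (∫ z : ℝ, Real.exp (-(z ^ 2 / 2 + α * Real.sin (2 * π * z / ε)) / σ))
        - (Real.sqrt (2 * π * σ))⁻¹ * Real.exp (-x ^ 2 / (2 * σ))|) ≤ 2 := by
  set G : ℝ := Real.sqrt (2 * π * σ) with hG
  have hGpos : 0 < G := Real.sqrt_pos.2 (by positivity)
  set Z : ℝ := ∫ z : ℝ, Real.exp (-(z ^ 2 / 2 + α * Real.sin (2 * π * z / ε)) / σ) with hZ
  have hZpos : 0 < Z := Z_pos σ α ε hσ hα
  have hint1 : Integrable (fun x : ℝ =>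
      Real.exp (-(x ^ 2 / 2 + α * Real.sin (2 * π * x / ε)) / σ) / Z) :=
    (num_integrable σ α ε hσ hα).div_const Z
  have hint2 : Integrable (fun x : ℝ => G⁻¹ * Real.exp (-x ^ 2 / (2 * σ))) :=
    (gauss_integrable σ hσ).const_mul _
  have habs : Integrable (fun x : ℝ =>
      |Real.exp (-(x ^ 2 / 2 + α * Real.sin (2 * π * x / ε)) / σ) / Z
        - G⁻¹ * Real.exp (-x ^ 2 / (2 * σ))|) := (hint1.sub hint2).abs
  have hmono : ∀ x : ℝ,
      |Real.exp (-(x ^ 2 / 2 + α * Real.sin (2 * π * x / ε)) / σ) / Z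
        - G⁻¹ * Real.exp (-x ^ 2 / (2 * σ))|
      ≤ Real.exp (-(x ^ 2 / 2 + α * Real.sin (2 * π * x / ε)) / σ) / Z
        + G⁻¹ * Real.exp (-x ^ 2 / (2 * σ)) := by
    intro x
    have h1 : 0 ≤ Real.exp (-(x ^ 2 / 2 + α * Real.sin (2 * π * x / ε)) / σ) / Z :=
      div_nonneg (Real.exp_pos _).le hZpos.le
    have h2 : 0 ≤ G⁻¹ * Real.exp (-x ^ 2 / (2 * σ)) := by positivity
    calc |_ - _| ≤ |Real.exp (-(x ^ 2 / 2 + α * Real.sin (2 * π * x / ε)) / σ) / Z|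
          + |G⁻¹ * Real.exp (-x ^ 2 / (2 * σ))| := abs_sub _ _
      _ = _ := by rw [abs_of_nonneg h1, abs_of_nonneg h2]
  calc (∫ x : ℝ, |Real.exp (-(x ^ 2 / 2 + α * Real.sin (2 * π * x / ε)) / σ) / Z
        - G⁻¹ * Real.exp (-x ^ 2 / (2 * σ))|)
      ≤ ∫ x : ℝ, (Real.exp (-(x ^ 2 / 2 + α * Real.sin (2 * π * x / ε)) / σ) / Z
        + G⁻¹ * Real.exp (-x ^ 2 / (2 * σ))) :=
        integral_mono habs (hint1.add hint2) hmono
    _ = (∫ x : ℝ, Real.exp (-(x ^ 2 / 2 + α * Real.sin (2 * π * x / ε)) / σ)) / Z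
        + G⁻¹ * ∫ x : ℝ, Real.exp (-x ^ 2 / (2 * σ)) := by
        rw [MeasureTheory.integral_add hint1 hint2, MeasureTheory.integral_div,
          MeasureTheory.integral_const_mul]
    _ = 1 + 1 := by
        rw [← hZ, div_self hZpos.ne', gauss_value σ hσ, ← hG, inv_mul_cancel₀ hGpos.ne']
    _ = 2 := by norm_num

private lemma main_bound (σ α K I₀ Q : ℝ) (hσ : 0 < σ) (hα : 0 < α) (hK : 0 < K)
    (hI₀ : I₀ = ∫ y in (0:ℝ)..1, Real.exp (-(α / σ) * Real.sin (2 * π * y)))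
    (hI0pos : 0 < I₀)
    (hQ : Q = ∫ x in (-K)..K, Real.exp (-x ^ 2 / (2 * σ)))
    (ε : ℝ) (hε : 0 < ε) (hQε : 0 < Q - 2 * ε)
    (hbtε : 0 < (Real.sqrt (2 * π * σ))⁻¹
      - Real.exp (-α / (2 * σ)) / (Real.exp (-(K * ε) / σ) * I₀ * (Q - 2 * ε))) :
    ((Real.sqrt (2 * π * σ))⁻¹
        - Real.exp (-α / (2 * σ)) / (Real.exp (-(K * ε) / σ) * I₀ * (Q - 2 * ε)))
        * Real.exp (-(K * ε) / σ) / 3 * (Q - 2 * ε)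
      ≤ ∫ x : ℝ, |Real.exp (-(x ^ 2 / 2 + α * Real.sin (2 * π * x / ε)) / σ) /
          (∫ z : ℝ, Real.exp (-(z ^ 2 / 2 + α * Real.sin (2 * π * z / ε)) / σ))
        - (Real.sqrt (2 * π * σ))⁻¹ * Real.exp (-x ^ 2 / (2 * σ))| := by
  set G : ℝ := Real.sqrt (2 * π * σ) with hGdef
  have hGpos : 0 < G := Real.sqrt_pos.2 (by positivity)
  set Z : ℝ := ∫ z : ℝ, Real.exp (-(z ^ 2 / 2 + α * Real.sin (2 * π * z / ε)) / σ) with hZdef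
  have hZpos : 0 < Z := Z_pos σ α ε hσ hα
  set β : ℝ := G⁻¹ - Real.exp (-α / (2 * σ)) / Z with hβdef
  set Zl : ℝ := Real.exp (-(K * ε) / σ) * I₀ * (Q - 2 * ε) with hZldef
  have hZlpos : 0 < Zl := by rw [hZldef]; positivity
  -- index range
  set Mi : ℤ := ⌈-K / ε⌉ with hMidef
  set Li : ℤ := ⌊K / ε⌋ with hLidef
  have hM0 : Mi ≤ 0 := by
    rw [hMidef]
    apply Int.ceil_le.2
    push_cast
    apply div_nonpos_of_nonpos_of_nonneg <;> linarith
  have hL0 : 0 ≤ Li := by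
    rw [hLidef]
    apply Int.le_floor.2
    push_cast
    positivity
  have hML : Mi ≤ Li := le_trans hM0 hL0
  set n : ℕ := (Li - Mi).toNat with hndef
  have hMnZ : (Mi + n : ℤ) = Li := by
    rw [hndef, Int.toNat_of_nonneg (by omega)]; ring
  have hMn : (Mi : ℝ) + (n : ℝ) = (Li : ℝ) := by exact_mod_cast congrArg (Int.cast : ℤ → ℝ) hMnZ
  set a : ℕ → ℝ := fun i => ((Mi : ℝ) + i) * ε with ha
  have ha0 : a 0 = (Mi : ℝ) * ε := by simp [ha]
  have han : a n = (Li : ℝ) * ε := by simp only [ha]; rw [hMn]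
  have haM1 : -K ≤ (Mi : ℝ) * ε := by
    have h := Int.le_ceil (-K / ε)
    rw [← hMidef] at h
    calc -K = -K / ε * ε := by field_simp
      _ ≤ (Mi : ℝ) * ε := mul_le_mul_of_nonneg_right h hε.le
  have haM2 : (Mi : ℝ) * ε ≤ -K + ε := by
    have h := (Int.ceil_lt_add_one (-K / ε)).le
    rw [← hMidef] at h
    calc (Mi : ℝ) * ε ≤ (-K / ε + 1) * ε := mul_le_mul_of_nonneg_right h hε.le
      _ = -K + ε := by field_simp
  have haL1 : (Li : ℝ) * ε ≤ K := by
    have h := Int.floor_le (K / ε)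
    rw [← hLidef] at h
    calc (Li : ℝ) * ε ≤ K / ε * ε := mul_le_mul_of_nonneg_right h hε.le
      _ = K := by field_simp
  have haL2 : K - ε ≤ (Li : ℝ) * ε := by
    have h := (Int.sub_one_lt_floor (K / ε)).le
    rw [← hLidef] at h
    calc K - ε = (K / ε - 1) * ε := by field_simp
      _ ≤ (Li : ℝ) * ε := mul_le_mul_of_nonneg_right h hε.le
  have ha0an : a 0 ≤ a n := by
    rw [ha0, han]
    exact mul_le_mul_of_nonneg_right (by exact_mod_cast hML) hε.le
  -- continuity and integrability
  have hφc : Continuous (fun x : ℝ => Real.exp (-x ^ 2 / (2 * σ))) := by fun_prop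
  have hFc : Continuous (fun x : ℝ =>
      Real.exp (-x ^ 2 / (2 * σ)) * Real.exp (-(α/σ) * Real.sin (2 * π * x / ε))) := by fun_prop
  have hHc : Continuous (fun x : ℝ =>
      |Real.exp (-(x ^ 2 / 2 + α * Real.sin (2 * π * x / ε)) / σ) / Z
        - G⁻¹ * Real.exp (-x ^ 2 / (2 * σ))|) := by fun_prop
  -- adjacent interval sums
  have hsumφ := intervalIntegral.sum_integral_adjacent_intervals (μ := volume) (a := a) (n := n)
    (f := fun x => Real.exp (-x ^ 2 / (2 * σ))) (fun i _ => hφc.intervalIntegrable _ _)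
  have hsumF := intervalIntegral.sum_integral_adjacent_intervals (μ := volume) (a := a) (n := n)
    (f := fun x => Real.exp (-x ^ 2 / (2 * σ)) * Real.exp (-(α/σ) * Real.sin (2 * π * x / ε)))
    (fun i _ => hFc.intervalIntegrable _ _)
  have hsumH := intervalIntegral.sum_integral_adjacent_intervals (μ := volume) (a := a) (n := n)
    (f := fun x => |Real.exp (-(x ^ 2 / 2 + α * Real.sin (2 * π * x / ε)) / σ) / Z
        - G⁻¹ * Real.exp (-x ^ 2 / (2 * σ))|)
    (fun i _ => hHc.intervalIntegrable _ _)
  beta_reduce at hsumφ hsumF hsumH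
  set W : ℝ := ∫ x in (a 0)..(a n), Real.exp (-x ^ 2 / (2 * σ)) with hWdef
  -- per-period index bounds
  have hper : ∀ i : ℕ, i < n → -K ≤ ((Mi + i : ℤ) : ℝ) * ε ∧ (((Mi + i : ℤ) : ℝ) + 1) * ε ≤ K := by
    intro i hi
    have hiZ : (i : ℤ) < Li - Mi := by
      rw [hndef] at hi
      exact_mod_cast Int.lt_toNat.mp hi
    constructor
    · calc -K ≤ (Mi : ℝ) * ε := haM1
        _ ≤ ((Mi + i : ℤ) : ℝ) * ε := by
          apply mul_le_mul_of_nonneg_right _ hε.le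
          push_cast
          linarith [Nat.cast_nonneg (α := ℝ) i]
    · have hle : ((Mi + i + 1 : ℤ) : ℝ) ≤ (Li : ℝ) := by exact_mod_cast (by omega : (Mi + i + 1 : ℤ) ≤ Li)
      calc (((Mi + i : ℤ) : ℝ) + 1) * ε ≤ (Li : ℝ) * ε := by
            apply mul_le_mul_of_nonneg_right _ hε.le
            push_cast at hle ⊢
            linarith
        _ ≤ K := haL1
  have hend1 : ∀ i : ℕ, ((Mi + i : ℤ) : ℝ) * ε = a i := by
    intro i; simp only [ha]; push_cast; ring
  have hend2 : ∀ i : ℕ, (((Mi + i : ℤ) : ℝ) + 1) * ε = a (i + 1) := by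
    intro i; simp only [ha]; push_cast; ring
  -- B1: lower bound for Z
  have hB1 : ∀ i ∈ Finset.range n,
      Real.exp (-(K * ε) / σ) * I₀ * (∫ y in (a i)..(a (i+1)), Real.exp (-y ^ 2 / (2 * σ)))
        ≤ ∫ x in (a i)..(a (i+1)),
            Real.exp (-x ^ 2 / (2 * σ)) * Real.exp (-(α/σ) * Real.sin (2 * π * x / ε)) := by
    intro i hi
    have hi' := Finset.mem_range.1 hi
    have h := period_Z σ α K ε hσ hα hε hK (Mi + i) (hper i hi').1 (hper i hi').2
    rw [hend1 i, hend2 i, ← hI₀] at h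
    exact h
  have hZW : Real.exp (-(K * ε) / σ) * I₀ * W
      ≤ ∫ x in (a 0)..(a n),
          Real.exp (-x ^ 2 / (2 * σ)) * Real.exp (-(α/σ) * Real.sin (2 * π * x / ε)) := by
    rw [← hsumF, ← hsumφ, Finset.mul_sum]
    exact Finset.sum_le_sum hB1
  -- W ≥ Q - 2ε
  have hedge : ∀ c d : ℝ, c ≤ d → (∫ x in c..d, Real.exp (-x ^ 2 / (2 * σ))) ≤ d - c := by
    intro c d hcd
    have h := intervalIntegral.integral_mono_on (μ := volume) hcd
      (hφc.intervalIntegrable _ _) (_root_.intervalIntegrable_const (μ := volume) (c := (1:ℝ)))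
      (fun x _ => by
        rw [← Real.exp_zero]
        apply Real.exp_le_exp.2
        apply div_nonpos_of_nonpos_of_nonneg _ (by linarith)
        simpa using sq_nonneg x)
    simpa using h
  have hWQ : Q - 2 * ε ≤ W := by
    have hsplit1 : (∫ x in (-K)..(a 0), Real.exp (-x ^ 2 / (2 * σ)))
        + (∫ x in (a 0)..K, Real.exp (-x ^ 2 / (2 * σ)))
        = ∫ x in (-K)..K, Real.exp (-x ^ 2 / (2 * σ)) :=
      intervalIntegral.integral_add_adjacent_intervals
        (hφc.intervalIntegrable _ _) (hφc.intervalIntegrable _ _)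
    have hsplit2 : (∫ x in (a 0)..(a n), Real.exp (-x ^ 2 / (2 * σ)))
        + (∫ x in (a n)..K, Real.exp (-x ^ 2 / (2 * σ)))
        = ∫ x in (a 0)..K, Real.exp (-x ^ 2 / (2 * σ)) :=
      intervalIntegral.integral_add_adjacent_intervals
        (hφc.intervalIntegrable _ _) (hφc.intervalIntegrable _ _)
    have he1 : (∫ x in (-K)..(a 0), Real.exp (-x ^ 2 / (2 * σ))) ≤ ε := by
      have := hedge (-K) (a 0) (by rw [ha0]; linarith)
      rw [ha0] at this ⊢
      linarith
    have he2 : (∫ x in (a n)..K, Real.exp (-x ^ 2 / (2 * σ))) ≤ ε := by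
      have := hedge (a n) K (by rw [han]; linarith)
      rw [han] at this ⊢
      linarith
    rw [hQ, hWdef]
    linarith [hsplit1, hsplit2, he1, he2]
  -- Z is at least Zl
  have hFeq : (∫ x : ℝ, Real.exp (-x ^ 2 / (2 * σ)) * Real.exp (-(α/σ) * Real.sin (2 * π * x / ε)))
      = Z := by
    rw [hZdef]
    congr 1
    funext z
    rw [num_factor σ α ε hσ z]
  have hFint : Integrable (fun x : ℝ =>
      Real.exp (-x ^ 2 / (2 * σ)) * Real.exp (-(α/σ) * Real.sin (2 * π * x / ε))) := by
    have h := num_integrable σ α ε hσ hα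
    have heq : (fun x : ℝ => Real.exp (-(x ^ 2 / 2 + α * Real.sin (2 * π * x / ε)) / σ))
        = fun x : ℝ => Real.exp (-x ^ 2 / (2 * σ)) * Real.exp (-(α/σ) * Real.sin (2 * π * x / ε)) :=
      funext (num_factor σ α ε hσ)
    rwa [heq] at h
  have hZF : (∫ x in (a 0)..(a n),
      Real.exp (-x ^ 2 / (2 * σ)) * Real.exp (-(α/σ) * Real.sin (2 * π * x / ε))) ≤ Z := by
    rw [← hFeq, intervalIntegral.integral_of_le ha0an]
    exact setIntegral_le_integral hFint
      (Filter.Eventually.of_forall fun x => by positivity)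
  have hZlZ : Zl ≤ Z := by
    calc Zl ≤ Real.exp (-(K * ε) / σ) * I₀ * W := by
          rw [hZldef]
          exact mul_le_mul_of_nonneg_left hWQ (by positivity)
      _ ≤ _ := le_trans hZW hZF
  -- β bounds
  have hβlb : G⁻¹ - Real.exp (-α / (2 * σ)) / Zl ≤ β := by
    rw [hβdef]
    apply sub_le_sub_left
    exact div_le_div_of_nonneg_left (Real.exp_pos _).le hZlpos hZlZ
  have hβ0 : 0 ≤ β := le_trans hbtε.le hβlb
  -- B2: lower bound for the TV integral
  have hB2 : ∀ i ∈ Finset.range n,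
      β * Real.exp (-(K * ε) / σ) / 3
          * (∫ y in (a i)..(a (i+1)), Real.exp (-y ^ 2 / (2 * σ)))
        ≤ ∫ x in (a i)..(a (i+1)),
            |Real.exp (-(x ^ 2 / 2 + α * Real.sin (2 * π * x / ε)) / σ) / Z
              - G⁻¹ * Real.exp (-x ^ 2 / (2 * σ))| := by
    intro i hi
    have hi' := Finset.mem_range.1 hi
    have h := period_TV σ α K ε Z hσ hα hε hK hZpos (by exact hβ0)
      (Mi + i) (hper i hi').1 (hper i hi').2
    rw [hend1 i, hend2 i] at h
    exact h
  have hHW : β * Real.exp (-(K * ε) / σ) / 3 * W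
      ≤ ∫ x in (a 0)..(a n),
          |Real.exp (-(x ^ 2 / 2 + α * Real.sin (2 * π * x / ε)) / σ) / Z
            - G⁻¹ * Real.exp (-x ^ 2 / (2 * σ))| := by
    rw [← hsumH, ← hsumφ, Finset.mul_sum]
    exact Finset.sum_le_sum hB2
  -- total integral dominates the interval integral
  have hHint : Integrable (fun x : ℝ =>
      |Real.exp (-(x ^ 2 / 2 + α * Real.sin (2 * π * x / ε)) / σ) / Z
        - G⁻¹ * Real.exp (-x ^ 2 / (2 * σ))|) :=
    (((num_integrable σ α ε hσ hα).div_const Z).sub ((gauss_integrable σ hσ).const_mul _)).abs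
  have hHtot : (∫ x in (a 0)..(a n),
      |Real.exp (-(x ^ 2 / 2 + α * Real.sin (2 * π * x / ε)) / σ) / Z
        - G⁻¹ * Real.exp (-x ^ 2 / (2 * σ))|)
      ≤ ∫ x : ℝ, |Real.exp (-(x ^ 2 / 2 + α * Real.sin (2 * π * x / ε)) / σ) / Z
        - G⁻¹ * Real.exp (-x ^ 2 / (2 * σ))| := by
    rw [intervalIntegral.integral_of_le ha0an]
    exact setIntegral_le_integral hHint (Filter.Eventually.of_forall fun x => abs_nonneg _)
  -- final chain
  have hβexp : 0 ≤ β * Real.exp (-(K * ε) / σ) / 3 := by positivity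
  calc (G⁻¹ - Real.exp (-α / (2 * σ)) / Zl) * Real.exp (-(K * ε) / σ) / 3 * (Q - 2 * ε)
      ≤ β * Real.exp (-(K * ε) / σ) / 3 * (Q - 2 * ε) := by
        apply mul_le_mul_of_nonneg_right _ hQε.le
        apply div_le_div_of_nonneg_right ?_ (by norm_num)
        exact mul_le_mul_of_nonneg_right hβlb (Real.exp_pos _).le
    _ ≤ β * Real.exp (-(K * ε) / σ) / 3 * W := mul_le_mul_of_nonneg_left hWQ hβexp
    _ ≤ _ := le_trans hHW hHtot

/-- The Gibbs densities `π^ε ∝ e^{-(x²/2 + α sin(2πx/ε))/σ}` stay boundedly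
away (in total variation) from their weak limit, the Gaussian `π⁰ = N(0,σ)`:
`liminf_{ε→0⁺} ∫ |π^ε - π⁰| ≥ (1/6)(1 - e^{-α/(2σ)}/I₀) > 0`,
where `I₀ = ∫_0^1 e^{-(α/σ) sin(2πy)} dy`. -/
theorem stmt11 (σ α : ℝ) (hσ : 0 < σ) (hα : 0 < α)
    (πeps : ℝ → ℝ → ℝ)
    (hπeps : ∀ ε x, πeps ε x =
      Real.exp (-(x ^ 2 / 2 + α * Real.sin (2 * π * x / ε)) / σ) /
        ∫ z, Real.exp (-(z ^ 2 / 2 + α * Real.sin (2 * π * z / ε)) / σ))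
    (π0 : ℝ → ℝ)
    (hπ0 : ∀ x, π0 x = (Real.sqrt (2 * π * σ))⁻¹ * Real.exp (-x ^ 2 / (2 * σ)))
    (I₀ : ℝ)
    (hI₀ : I₀ = ∫ y in (0:ℝ)..1, Real.exp (-(α / σ) * Real.sin (2 * π * y))) :
    (1 / 6) * (1 - Real.exp (-α / (2 * σ)) / I₀) ≤
      liminf (fun ε : ℝ => ∫ x, |πeps ε x - π0 x|) (nhdsWithin 0 (Set.Ioi 0)) ∧
    0 < (1 / 6) * (1 - Real.exp (-α / (2 * σ)) / I₀) ∧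
    ¬ Tendsto (fun ε : ℝ => ∫ x, |πeps ε x - π0 x|) (nhdsWithin 0 (Set.Ioi 0)) (nhds 0) := by
  have hTV : ∀ ε : ℝ, (∫ x, |πeps ε x - π0 x|)
      = ∫ x : ℝ, |Real.exp (-(x ^ 2 / 2 + α * Real.sin (2 * π * x / ε)) / σ) /
          (∫ z : ℝ, Real.exp (-(z ^ 2 / 2 + α * Real.sin (2 * π * z / ε)) / σ))
        - (Real.sqrt (2 * π * σ))⁻¹ * Real.exp (-x ^ 2 / (2 * σ))| := by
    intro ε
    congr 1
    funext x
    rw [hπeps, hπ0]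
  set G : ℝ := Real.sqrt (2 * π * σ) with hGdef
  have hGpos : 0 < G := Real.sqrt_pos.2 (by positivity)
  have hI01 : 1 ≤ I₀ := hI₀ ▸ I0_ge_one σ α hσ hα
  have hI0pos : 0 < I₀ := lt_of_lt_of_le one_pos hI01
  set r : ℝ := Real.exp (-α / (2 * σ)) / I₀ with hrdef
  have hr0 : 0 < r := by positivity
  have hr1 : r < 1 := by
    rw [hrdef, div_lt_one hI0pos]
    have h1 : Real.exp (-α / (2 * σ)) < 1 := by
      rw [Real.exp_lt_one_iff]
      have : 0 < α / (2 * σ) := by positivity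
      linarith [neg_div (2*σ) α]
    linarith
  have hc_eq : (1 / 6) * (1 - Real.exp (-α / (2 * σ)) / I₀) = (1 - r) / 6 := by
    rw [hrdef]; ring
  have hcpos : 0 < (1 - r) / 6 := by linarith
  -- choose K
  obtain ⟨K, hK1, hQ⟩ : ∃ K : ℝ, 1 ≤ K ∧
      (3 + r) / 4 * G ≤ ∫ x in (-K)..K, Real.exp (-x ^ 2 / (2 * σ)) := by
    have htend : Tendsto (fun K : ℝ => ∫ x in (-K)..K, Real.exp (-x ^ 2 / (2 * σ)))
        atTop (𝓝 G) := by
      have h := MeasureTheory.intervalIntegral_tendsto_integral (gauss_integrable σ hσ)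
        tendsto_neg_atTop_atBot tendsto_id
      rwa [gauss_value σ hσ, ← hGdef] at h
    have hlt : (3 + r) / 4 * G < G := by nlinarith
    obtain ⟨K, hK⟩ := ((htend.eventually_const_le hlt).and (eventually_ge_atTop 1)).exists
    exact ⟨K, hK.2, hK.1⟩
  have hKpos : 0 < K := lt_of_lt_of_le one_pos hK1
  set Q : ℝ := ∫ x in (-K)..K, Real.exp (-x ^ 2 / (2 * σ)) with hQdef
  have hQpos : 0 < Q := lt_of_lt_of_le (by nlinarith) hQ
  -- bound functions of ε
  set bt : ℝ → ℝ := fun ε => G⁻¹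
      - Real.exp (-α / (2 * σ)) / (Real.exp (-(K * ε) / σ) * I₀ * (Q - 2 * ε)) with hbt
  set g : ℝ → ℝ := fun ε => bt ε * Real.exp (-(K * ε) / σ) / 3 * (Q - 2 * ε) with hg
  -- limits as ε → 0
  have hexp_t : Tendsto (fun ε : ℝ => Real.exp (-(K * ε) / σ)) (𝓝 0) (𝓝 1) := by
    have hc : Continuous fun ε : ℝ => Real.exp (-(K * ε) / σ) := by fun_prop
    have := hc.tendsto 0
    simpa using this
  have hlin_t : Tendsto (fun ε : ℝ => Q - 2 * ε) (𝓝 0) (𝓝 Q) := by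
    have hc : Continuous fun ε : ℝ => Q - 2 * ε := by fun_prop
    have := hc.tendsto 0
    simpa using this
  have hZl_t : Tendsto (fun ε : ℝ => Real.exp (-(K * ε) / σ) * I₀ * (Q - 2 * ε))
      (𝓝 0) (𝓝 (I₀ * Q)) := by
    have := (hexp_t.mul (tendsto_const_nhds (x := I₀))).mul hlin_t
    simpa using this
  have hIQpos : 0 < I₀ * Q := by positivity
  have hbt_t : Tendsto bt (𝓝 0) (𝓝 (G⁻¹ - Real.exp (-α / (2 * σ)) / (I₀ * Q))) :=
    tendsto_const_nhds.sub (tendsto_const_nhds.div hZl_t hIQpos.ne')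
  have hg_t : Tendsto g (𝓝 0)
      (𝓝 ((G⁻¹ - Real.exp (-α / (2 * σ)) / (I₀ * Q)) * 1 / 3 * Q)) :=
    ((hbt_t.mul hexp_t).div_const 3).mul hlin_t
  have hkey0 : (1 - r) / 6 < (G⁻¹ - Real.exp (-α / (2 * σ)) / (I₀ * Q)) * 1 / 3 * Q := by
    have hrQ : Real.exp (-α / (2 * σ)) / (I₀ * Q) = r / Q := by
      rw [hrdef, div_div]
    rw [hrQ]
    have expand : (G⁻¹ - r / Q) * 1 / 3 * Q = Q / G / 3 - r / 3 := by
      field_simp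
    rw [expand]
    have hQG : (3 + r) / 4 ≤ Q / G := by
      rw [le_div_iff₀ hGpos]
      exact hQ
    linarith
  have hbt0_pos : 0 < G⁻¹ - Real.exp (-α / (2 * σ)) / (I₀ * Q) := by
    nlinarith [hkey0, hcpos, hQpos]
  -- main eventual bound
  have hmain : ∀ᶠ ε in nhdsWithin (0:ℝ) (Set.Ioi 0), g ε ≤ ∫ x, |πeps ε x - π0 x| := by
    have h1 : ∀ᶠ ε in nhdsWithin (0:ℝ) (Set.Ioi 0), 0 < Q - 2 * ε :=
      (hlin_t.mono_left nhdsWithin_le_nhds).eventually_const_lt hQpos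
    have h2 : ∀ᶠ ε in nhdsWithin (0:ℝ) (Set.Ioi 0), 0 < bt ε :=
      (hbt_t.mono_left nhdsWithin_le_nhds).eventually_const_lt hbt0_pos
    filter_upwards [h1, h2, self_mem_nhdsWithin] with ε hQε hbtε hεpos
    rw [hTV ε, hg]
    exact main_bound σ α K I₀ Q hσ hα hKpos hI₀ hI0pos hQdef ε hεpos hQε hbtε
  have hglim : ∀ᶠ ε in nhdsWithin (0:ℝ) (Set.Ioi 0), (1 - r) / 6 ≤ g ε :=
    (hg_t.mono_left nhdsWithin_le_nhds).eventually_const_le hkey0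
  have hkey : ∀ᶠ ε in nhdsWithin (0:ℝ) (Set.Ioi 0),
      (1 - r) / 6 ≤ ∫ x, |πeps ε x - π0 x| := by
    filter_upwards [hmain, hglim] with ε h1 h2
    linarith
  have hub : ∀ᶠ ε in nhdsWithin (0:ℝ) (Set.Ioi 0), (∫ x, |πeps ε x - π0 x|) ≤ 2 :=
    Filter.Eventually.of_forall fun ε => (hTV ε) ▸ TV_le_two σ α ε hσ hα
  have hlim : (1 - r) / 6 ≤ liminf (fun ε : ℝ => ∫ x, |πeps ε x - π0 x|)
      (nhdsWithin 0 (Set.Ioi 0)) :=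
    le_liminf_of_le (Filter.isCoboundedUnder_ge_of_eventually_le _ hub) hkey
  refine ⟨hc_eq ▸ hlim, hc_eq ▸ hcpos, ?_⟩
  intro hT
  have h0 : liminf (fun ε : ℝ => ∫ x, |πeps ε x - π0 x|) (nhdsWithin 0 (Set.Ioi 0)) = 0 :=
    hT.liminf_eq
  rw [h0] at hlim
  linarith
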